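/- If x is an integer with x ≥ 2, then log(1 + 1/(x−1)) ≤ 1/x + 25/(32 x²). -/

import Mathlib

lemma log_cubic_bound (y : ℝ) (hy : 0 ≤ y) :
    Real.log (1 + y) ≤ y - y ^ 2 / 2 + y ^ 3 / 3 := by
  set f : ℝ → ℝ := fun t => t - t ^ 2 / 2 + t ^ 3 / 3 - Real.log (1 + t) with hf
  have hd : ∀ t : ℝ, -1 < t → HasDerivAt f (1 - t + t ^ 2 - 1 / (1 + t)) t := by
    intro t ht
    have h1 : HasDerivAt (fun u : ℝ => 1 + u) 1 t := by
      simpa using (hasDerivAt_id t).const_add 1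
    have h2 : HasDerivAt (fun u : ℝ => Real.log (1 + u)) (1 / (1 + t)) t := by
      have := (Real.hasDerivAt_log (by linarith : (1 : ℝ) + t ≠ 0)).comp t h1
      exact this.congr_deriv (by simp)
    have h3 : HasDerivAt (fun u : ℝ => u - u ^ 2 / 2 + u ^ 3 / 3) (1 - t + t ^ 2) t := by
      have := (((hasDerivAt_pow 2 t).div_const 2).const_sub 0)
      have hp2 : HasDerivAt (fun u : ℝ => u ^ 2 / 2) t t := by
        simpa using (hasDerivAt_pow 2 t).div_const 2
      have hp3 : HasDerivAt (fun u : ℝ => u ^ 3 / 3) (t ^ 2) t := by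
        have := (hasDerivAt_pow 3 t).div_const 3
        simpa using this.congr_deriv (by ring)
      exact ((hasDerivAt_id t).sub hp2).add hp3
    exact h3.sub h2
  have hmono : MonotoneOn f (Set.Ici (0 : ℝ)) := by
    apply monotoneOn_of_deriv_nonneg (convex_Ici 0)
    · apply ContinuousOn.sub (by fun_prop)
      apply Real.continuousOn_log.comp (by fun_prop)
      intro t ht
      simp only [Set.mem_Ici] at ht
      simp only [Set.mem_compl_iff, Set.mem_singleton_iff]
      intro h; linarith
    · intro t ht
      rw [interior_Ici] at ht
      exact (hd t (by linarith [Set.mem_Ioi.mp ht])).differentiableAt.differentiableWithinAt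
    · intro t ht
      rw [interior_Ici] at ht
      have ht' : (0 : ℝ) < t := Set.mem_Ioi.mp ht
      rw [(hd t (by linarith)).deriv]
      rw [sub_nonneg, div_le_iff₀ (by linarith : (0:ℝ) < 1 + t)]
      nlinarith
  have h0 : f 0 ≤ f y := hmono (Set.mem_Ici.mpr le_rfl) (Set.mem_Ici.mpr hy) hy
  simp only [hf] at h0
  norm_num at h0
  linarith

theorem stmt_8 (x : ℤ) (hx : 2 ≤ x) :
    Real.log (1 + 1 / ((x : ℝ) - 1)) ≤ 1 / (x : ℝ) + 25 / (32 * (x : ℝ) ^ 2) := by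
  rcases eq_or_lt_of_le hx with h2 | h3
  · -- x = 2
    subst h2
    have e1 : ((2:ℤ):ℝ) = 2 := by norm_num
    rw [e1]
    norm_num
    linarith [Real.log_two_lt_d9]
  · have hx3 : (3 : ℤ) ≤ x := h3
    have hX : (3 : ℝ) ≤ (x : ℝ) := by exact_mod_cast hx3
    set X : ℝ := (x : ℝ) with hXdef
    have hX1 : (0 : ℝ) < X - 1 := by linarith
    set y : ℝ := 1 / (X - 1) with hy
    have hy0 : 0 ≤ y := by positivity
    have hlog := log_cubic_bound y hy0
    have hpoly : y - y ^ 2 / 2 + y ^ 3 / 3 ≤ 1 / X + 25 / (32 * X ^ 2) := by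
      have hXpos : (0 : ℝ) < X := by linarith
      rw [hy, ← sub_nonneg]
      have key : 1 / X + 25 / (32 * X ^ 2) -
          (1 / (X - 1) - (1 / (X - 1)) ^ 2 / 2 + (1 / (X - 1)) ^ 3 / 3) =
          (27 * X ^ 3 - 113 * X ^ 2 + 129 * X - 75) / (96 * X ^ 2 * (X - 1) ^ 3) := by
        field_simp
        ring
      rw [key]
      apply div_nonneg
      · nlinarith [sq_nonneg (X - 3)]
      · positivity
    linarith
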